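/- Let g ≥ 1 and let rec* : ℤ^{P({1,...,g})} → ℤ^{2g} be the ℤ-linear map with rec*(ε_I) = Σ_{j ∉ I} φ_j + Σ_{j ∈ I} φ̄_j. Then the kernel N' of rec* is generated, as an abelian group, by the elements ε_I + ε_J − ε_K − ε_L with I ∪ J = K ∪ L and I ∩ J = K ∩ L. -/

import Mathlib

noncomputable def recStar (g : ℕ) :
    (Finset (Fin g) →₀ ℤ) →ₗ[ℤ] ((Fin g → ℤ) × (Fin g → ℤ)) :=
  Finsupp.linearCombination ℤ fun I =>
    ((fun j => if j ∈ I then 0 else 1), fun j => if j ∈ I then 1 else 0)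

noncomputable def Sspan (g : ℕ) : Submodule ℤ (Finset (Fin g) →₀ ℤ) :=
  Submodule.span ℤ
        {x : Finset (Fin g) →₀ ℤ |
          ∃ I J K L : Finset (Fin g), I ∪ J = K ∪ L ∧ I ∩ J = K ∩ L ∧
            x = Finsupp.single I 1 + Finsupp.single J 1 -
              Finsupp.single K 1 - Finsupp.single L 1}

lemma lemA (g : ℕ) (I J : Finset (Fin g)) :
    Finsupp.single I 1 + Finsupp.single J 1 - Finsupp.single (I ∪ J) (1:ℤ)
      - Finsupp.single (I ∩ J) 1 ∈ Sspan g := by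
  refine Submodule.subset_span ⟨I, J, I ∪ J, I ∩ J, ?_, ?_, rfl⟩
  · exact (Finset.union_eq_left.mpr (Finset.inter_subset_union)).symm
  · exact (Finset.inter_eq_right.mpr (Finset.inter_subset_union)).symm

noncomputable def Tmap (g : ℕ) : (Finset (Fin g) →₀ ℤ) →ₗ[ℤ] (Finset (Fin g) →₀ ℤ) :=
  Finsupp.linearCombination ℤ fun I =>
    (∑ j ∈ I, Finsupp.single {j} (1:ℤ)) + (1 - (I.card : ℤ)) • Finsupp.single ∅ 1

lemma lemB (g : ℕ) (I : Finset (Fin g)) :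
    Finsupp.single I 1 - Tmap g (Finsupp.single I 1) ∈ Sspan g := by
  classical
  induction I using Finset.induction_on with
  | empty => simp [Tmap, Finsupp.linearCombination_single]
  | @insert a s ha ih =>
      have hgen := lemA g s {a}
      rw [show s ∪ {a} = insert a s by rw [Finset.union_comm]; rfl, Finset.inter_singleton_of_notMem ha] at hgen
      have key : Finsupp.single (insert a s) 1 - Tmap g (Finsupp.single (insert a s) 1)
          = (Finsupp.single s 1 - Tmap g (Finsupp.single s 1))
            - (Finsupp.single s 1 + Finsupp.single {a} 1 - Finsupp.single (insert a s) (1:ℤ)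
               - Finsupp.single ∅ 1) := by
        simp only [Tmap, Finsupp.linearCombination_single, one_smul,
          Finset.sum_insert ha, Finset.card_insert_of_notMem ha]
        push_cast
        module
      rw [key]
      exact Submodule.sub_mem _ ih hgen

noncomputable def Umap (g : ℕ) (hg : 1 ≤ g) :
    ((Fin g → ℤ) × (Fin g → ℤ)) →ₗ[ℤ] (Finset (Fin g) →₀ ℤ) :=
  (∑ j : Fin g, LinearMap.smulRight
      ((LinearMap.proj j).comp (LinearMap.snd ℤ (Fin g → ℤ) (Fin g → ℤ)))
      (Finsupp.single {j} (1:ℤ)))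
    + LinearMap.smulRight
      ((LinearMap.proj (⟨0, hg⟩ : Fin g)).comp (LinearMap.fst ℤ (Fin g → ℤ) (Fin g → ℤ))
        + (LinearMap.proj (⟨0, hg⟩ : Fin g)).comp (LinearMap.snd ℤ (Fin g → ℤ) (Fin g → ℤ))
        - ∑ j : Fin g, (LinearMap.proj j).comp (LinearMap.snd ℤ (Fin g → ℤ) (Fin g → ℤ)))
      (Finsupp.single ∅ (1:ℤ))

lemma TeqU (g : ℕ) (hg : 1 ≤ g) : Tmap g = (Umap g hg).comp (recStar g) := by
  classical
  apply Finsupp.lhom_ext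
  intro I b
  simp only [Tmap, recStar, Umap, Finsupp.linearCombination_single, LinearMap.comp_apply,
    LinearMap.add_apply, LinearMap.sub_apply, LinearMap.sum_apply, LinearMap.smulRight_apply,
    LinearMap.proj_apply, LinearMap.fst_apply, LinearMap.snd_apply, Prod.smul_mk,
    Pi.smul_apply, smul_eq_mul]
  have h1 : ∀ j : Fin g, b * (if j ∈ I then (1:ℤ) else 0) = if j ∈ I then b else 0 := by
    intro j; split <;> ring
  have h2 : (∑ j : Fin g, if j ∈ I then (Finsupp.single ({j} : Finset (Fin g)) (b:ℤ)) else 0)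
      = ∑ j ∈ I, Finsupp.single ({j} : Finset (Fin g)) (b:ℤ) := by
    rw [Finset.sum_ite_mem, Finset.univ_inter]
  have h3 : (∑ j : Fin g, if j ∈ I then (b:ℤ) else 0) = I.card • b := by
    rw [Finset.sum_ite_mem, Finset.univ_inter, Finset.sum_const]
  simp only [smul_sub, smul_add, Finsupp.smul_single, smul_eq_mul, mul_one]
  have h4 : ∀ x : Fin g, (Finsupp.single ({x} : Finset (Fin g)) (if x ∈ I then b else 0))
      = if x ∈ I then Finsupp.single ({x} : Finset (Fin g)) b else 0 := by
    intro x; split <;> simp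
  have h5 : ((b * if (⟨0, hg⟩:Fin g) ∈ I then 0 else 1) + b * if (⟨0, hg⟩:Fin g) ∈ I then 1 else 0) = b := by
    split <;> ring
  rw [Finset.smul_sum]
  simp only [Finsupp.smul_single, smul_eq_mul, mul_one, h1, h4, h2, h3]
  congr 1
  rw [nsmul_eq_mul]
  split <;> ring


lemma lemC (g : ℕ) (x : Finset (Fin g) →₀ ℤ) : x - Tmap g x ∈ Sspan g := by
  induction x using Finsupp.induction_linear with
  | zero => simp
  | add f h hf hh =>
      have := Submodule.add_mem _ hf hh
      convert this using 1
      rw [map_add]; abel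
  | single a b =>
      have := (Sspan g).smul_mem b (lemB g a)
      convert this using 1
      rw [smul_sub, ← map_smul]
      simp [Finsupp.smul_single']

theorem stmt8 (g : ℕ) (hg : 1 ≤ g) :
    LinearMap.ker (recStar g) =
      Submodule.span ℤ
        {x : Finset (Fin g) →₀ ℤ |
          ∃ I J K L : Finset (Fin g), I ∪ J = K ∪ L ∧ I ∩ J = K ∩ L ∧
            x = Finsupp.single I 1 + Finsupp.single J 1 -
              Finsupp.single K 1 - Finsupp.single L 1} := by
  apply le_antisymm
  · intro x hx
    have hx0 : recStar g x = 0 := hx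
    have hT : Tmap g x = 0 := by
      rw [TeqU g hg]
      simp [LinearMap.comp_apply, hx0]
    have h := lemC g x
    rw [hT, sub_zero] at h
    exact h
  · rw [Submodule.span_le]
    rintro x ⟨I, J, K, L, hU, hI, rfl⟩
    simp only [SetLike.mem_coe, LinearMap.mem_ker, map_sub, map_add]
    simp only [recStar, Finsupp.linearCombination_single, one_smul]
    have hu : ∀ j : Fin g, (j ∈ I ∨ j ∈ J) ↔ (j ∈ K ∨ j ∈ L) := by
      intro j; rw [← Finset.mem_union, ← Finset.mem_union, hU]
    have hi : ∀ j : Fin g, (j ∈ I ∧ j ∈ J) ↔ (j ∈ K ∧ j ∈ L) := by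
      intro j; rw [← Finset.mem_inter, ← Finset.mem_inter, hI]
    rw [Prod.ext_iff]
    constructor <;>
      · show _ = (0 : Fin g → ℤ)
        funext j
        have h1 := hu j
        have h2 := hi j
        simp only [Prod.fst_add, Prod.snd_add, Prod.fst_sub, Prod.snd_sub, Pi.add_apply,
          Pi.sub_apply, Pi.zero_apply]
        by_cases hI' : j ∈ I <;> by_cases hJ' : j ∈ J <;> by_cases hK' : j ∈ K <;>
          by_cases hL' : j ∈ L <;> simp_all
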